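/- arXiv:2601.07764 — 4 statements merged into one kernel-verified Lean document; each statement's English description precedes it below -/
import Mathlib

section
/- Optimal splitting proportion under the point-mass prior: Let a, c > 0 and define J(π) := π(1−π)/(aπ + c) for π ∈ (0,1). Then J attains a unique maximum on (0,1), at π* = (√(c(c+a)) − c)/a. Moreover, writing τ² := a/(a+c) ∈ (0,1), this maximizer equals π* = √(1−τ²)/(1 + √(1−τ²)). Consequently, the function f(π) := √(1−π)·h²γ/√(h²γ² + c/π) on (0,1), with a = h²γ², is uniquely maximized at the same π*. -/
/-!
Optimal splitting proportion under the point-mass prior: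
for `a, c > 0` the function `J(π) = π(1−π)/(aπ + c)` on `(0,1)` has a unique maximizer
`π* = (√(c(c+a)) − c)/a`, which equals `√(1−τ²)/(1+√(1−τ²))` with `τ² = a/(a+c)`;
consequently (with `a = h²γ²`) the function
`f(π) = √(1−π)·h²γ/√(h²γ² + c/π)` is uniquely maximized at the same `π*`.
-/



/-- The objective `J(π) = π(1−π)/(aπ+c)`. -/
noncomputable def Jobj (a c π : ℝ) : ℝ := π * (1 - π) / (a * π + c)

/-- The split-power objective `f(π) = √(1−π)·h²γ/√(h²γ² + c/π)`. -/
noncomputable def fobj (h γ c π : ℝ) : ℝ :=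
  Real.sqrt (1 - π) * h ^ 2 * γ / Real.sqrt (h ^ 2 * γ ^ 2 + c / π)

/-- The claimed optimal splitting proportion `π* = (√(c(c+a)) − c)/a`. -/
noncomputable def piStar (a c : ℝ) : ℝ := (Real.sqrt (c * (c + a)) - c) / a

lemma aux_s_facts (a c : ℝ) (ha : 0 < a) (hc : 0 < c) :
    c < Real.sqrt (c * (c + a)) ∧ Real.sqrt (c * (c + a)) < c + a := by
  have hs2 : Real.sqrt (c * (c + a)) ^ 2 = c * (c + a) := Real.sq_sqrt (by positivity)
  have hs_pos : 0 < Real.sqrt (c * (c + a)) := Real.sqrt_pos.mpr (by positivity)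
  constructor
  · nlinarith
  · nlinarith

lemma piStar_mem (a c : ℝ) (ha : 0 < a) (hc : 0 < c) :
    piStar a c ∈ Set.Ioo (0 : ℝ) 1 := by
  obtain ⟨h1, h2⟩ := aux_s_facts a c ha hc
  constructor
  · exact div_pos (by linarith) ha
  · rw [piStar, div_lt_one ha]; linarith

lemma J_lt (a c : ℝ) (ha : 0 < a) (hc : 0 < c) {π : ℝ}
    (hπ : π ∈ Set.Ioo (0 : ℝ) 1) (hne : π ≠ piStar a c) :
    Jobj a c π < Jobj a c (piStar a c) := by
  obtain ⟨hπ0, hπ1⟩ := hπ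
  have hs2 : Real.sqrt (c * (c + a)) ^ 2 = c * (c + a) := Real.sq_sqrt (by positivity)
  have hs_pos : 0 < Real.sqrt (c * (c + a)) := Real.sqrt_pos.mpr (by positivity)
  set s := Real.sqrt (c * (c + a)) with hs
  have hps : piStar a c = (s - c) / a := rfl
  have hd1 : 0 < a * π + c := by positivity
  have e1 : a * ((s - c) / a) + c = s := by field_simp; ring
  have hts : a * π + c ≠ s := by
    intro hyp
    apply hne
    rw [hps]
    field_simp
    linarith
  have htsq : 0 < (a * π + c - s) ^ 2 := by
    have h0 : a * π + c - s ≠ 0 := sub_ne_zero.mpr hts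
    positivity
  unfold Jobj
  rw [hps, e1, div_lt_div_iff₀ hd1 hs_pos]
  have e2 : (s - c) / a * (1 - (s - c) / a) = (s - c) * (a + c - s) / a ^ 2 := by
    field_simp; ring
  rw [e2, div_mul_eq_mul_div, lt_div_iff₀ (by positivity : (0:ℝ) < a ^ 2)]
  have hid : (s - c) * (a + c - s) * (a * π + c) - π * (1 - π) * s * a ^ 2
      = s * (a * π + c - s) ^ 2 := by
    linear_combination (a * π + c - s) * hs2
  nlinarith [mul_pos hs_pos htsq]

lemma piStar_tau (a c : ℝ) (ha : 0 < a) (hc : 0 < c) :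
    piStar a c = Real.sqrt (1 - a / (a + c)) / (1 + Real.sqrt (1 - a / (a + c))) := by
  have hac : 0 < a + c := by linarith
  set u := Real.sqrt c with hu
  set v := Real.sqrt (a + c) with hv
  have hu2 : u ^ 2 = c := Real.sq_sqrt hc.le
  have hv2 : v ^ 2 = a + c := Real.sq_sqrt hac.le
  have hu0 : 0 < u := Real.sqrt_pos.mpr hc
  have hv0 : 0 < v := Real.sqrt_pos.mpr hac
  have h1 : 1 - a / (a + c) = c / (a + c) := by field_simp; ring
  have h2 : Real.sqrt (1 - a / (a + c)) = u / v := by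
    rw [h1, Real.sqrt_div hc.le]
  have huv : Real.sqrt (c * (c + a)) = u * v := by
    rw [show c * (c + a) = c * (a + c) by ring, Real.sqrt_mul hc.le]
  rw [piStar, huv, h2]
  have hden : (0:ℝ) < 1 + u / v := by positivity
  rw [div_eq_div_iff (by linarith) (by linarith)]
  field_simp
  ring_nf
  nlinarith [hu2, hv2, hu0, hv0]

lemma fobj_eq (h γ c : ℝ) (hh : 0 < h) (hγ : 0 < γ) (hc : 0 < c) {π : ℝ}
    (hπ : π ∈ Set.Ioo (0 : ℝ) 1) :
    fobj h γ c π = h ^ 2 * γ * Real.sqrt (Jobj (h ^ 2 * γ ^ 2) c π) := by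
  obtain ⟨hπ0, hπ1⟩ := hπ
  have hJ : Jobj (h ^ 2 * γ ^ 2) c π = (1 - π) / (h ^ 2 * γ ^ 2 + c / π) := by
    unfold Jobj
    rw [div_eq_div_iff (by positivity) (by positivity)]
    field_simp
  rw [hJ, Real.sqrt_div (by linarith), fobj]
  ring

theorem optimal_split_proportion
    (h γ c : ℝ) (hh : 0 < h) (hγ : 0 < γ) (hc : 0 < c) :
    piStar (h ^ 2 * γ ^ 2) c ∈ Set.Ioo (0 : ℝ) 1 ∧
    (∀ π ∈ Set.Ioo (0 : ℝ) 1, π ≠ piStar (h ^ 2 * γ ^ 2) c →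
      Jobj (h ^ 2 * γ ^ 2) c π < Jobj (h ^ 2 * γ ^ 2) c (piStar (h ^ 2 * γ ^ 2) c)) ∧
    (h ^ 2 * γ ^ 2 / (h ^ 2 * γ ^ 2 + c) ∈ Set.Ioo (0 : ℝ) 1 ∧
      piStar (h ^ 2 * γ ^ 2) c
        = Real.sqrt (1 - h ^ 2 * γ ^ 2 / (h ^ 2 * γ ^ 2 + c))
            / (1 + Real.sqrt (1 - h ^ 2 * γ ^ 2 / (h ^ 2 * γ ^ 2 + c)))) ∧
    (∀ π ∈ Set.Ioo (0 : ℝ) 1, π ≠ piStar (h ^ 2 * γ ^ 2) c →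
      fobj h γ c π < fobj h γ c (piStar (h ^ 2 * γ ^ 2) c)) := by

  have ha : 0 < h ^ 2 * γ ^ 2 := by positivity
  have hmem := piStar_mem (h ^ 2 * γ ^ 2) c ha hc
  refine ⟨hmem, fun π hπ hne => J_lt _ _ ha hc hπ hne, ⟨⟨by positivity, ?_⟩,
    piStar_tau _ _ ha hc⟩, fun π hπ hne => ?_⟩
  · rw [div_lt_one (by positivity)]; linarith
  · rw [fobj_eq h γ c hh hγ hc hπ, fobj_eq h γ c hh hγ hc hmem]
    have hJlt := J_lt _ _ ha hc hπ hne
    have hJ0 : 0 ≤ Jobj (h ^ 2 * γ ^ 2) c π := by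
      obtain ⟨h0, h1⟩ := hπ
      apply div_nonneg (by nlinarith) (by positivity)
    exact mul_lt_mul_of_pos_left (Real.sqrt_lt_sqrt hJ0 hJlt) (by positivity)
end

section
/- Weak law of large numbers for bounded arrays: Let {X_{n,i}}_{i=1}^n be a triangular array of real random variables with |X_{n,i}| ≤ B almost surely for all i, n, for some constant B > 0. Suppose the array (X_{n,1},…,X_{n,n}) is conditionally exchangeable given a σ-algebra F_n, and that for every i ≠ j the conditional covariance Cov(X_{n,i}, X_{n,j} | F_n) → 0 in probability as n → ∞. Then (1/n)Σ_{i=1}^n X_{n,i} − E[(1/n)Σ_{i=1}^n X_{n,i} | F_n] → 0 in probability. -/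
/-!
Weak law of large numbers for bounded arrays:
for a triangular array `{X_{n,i}}_{i<n}` bounded by `B`, conditionally exchangeable given
`F_n`, with conditional covariances `Cov(X_{n,i}, X_{n,j} | F_n) → 0` in probability for
every `i ≠ j`, the centered sample mean
`(1/n)Σ_{i<n} X_{n,i} − E[(1/n)Σ_{i<n} X_{n,i} | F_n]` tends to `0` in probability.
-/

open MeasureTheory Filter

namespace WLLNAux

variable {Ω : Type*} [m0 : MeasurableSpace Ω] {m : Measure Ω} [IsProbabilityMeasure m]

lemma integrable_of_ae_bdd {f : Ω → ℝ} (hf : AEStronglyMeasurable f m) {B : ℝ}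
    (hB : ∀ᵐ ω ∂m, |f ω| ≤ B) : Integrable f m :=
  (integrable_const B).mono' hf (by filter_upwards [hB] with ω h using by rwa [Real.norm_eq_abs])

lemma condexp_ae_bdd {F : MeasurableSpace Ω} {f : Ω → ℝ} {B : ℝ} (hB : 0 ≤ B)
    (h : ∀ᵐ ω ∂m, |f ω| ≤ B) : ∀ᵐ ω ∂m, |(m[f|F]) ω| ≤ B := by
  have h' : ∀ᵐ ω ∂m, |f ω| ≤ (B.toNNReal : ℝ) := by
    filter_upwards [h] with ω hω using by rwa [Real.coe_toNNReal B hB]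
  filter_upwards [ae_bdd_condExp_of_ae_bdd h'] with ω hω using by
    rwa [Real.coe_toNNReal B hB] at hω

lemma integral_condexp_mul {F : MeasurableSpace Ω} (hF : F ≤ m0)
    {f g : Ω → ℝ} (hf : AEStronglyMeasurable[m0] f m)
    {B : ℝ} (hB : 0 ≤ B) (hfB : ∀ᵐ ω ∂m, |f ω| ≤ B) (hgB : ∀ᵐ ω ∂m, |g ω| ≤ B) :
    ∫ ω, (m[g|F]) ω * f ω ∂m = ∫ ω, (m[g|F]) ω * (m[f|F]) ω ∂m := by
  have hgc : ∀ᵐ ω ∂m, |(m[g|F]) ω| ≤ B := condexp_ae_bdd (m0 := m0) hB hgB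
  have hfint : Integrable f m := integrable_of_ae_bdd (m0 := m0) hf hfB
  have h1 : Integrable (m[g|F] * f) m := by
    refine integrable_of_ae_bdd (m0 := m0)
      ((stronglyMeasurable_condExp.mono hF).aestronglyMeasurable.mul hf) (B := B * B) ?_
    filter_upwards [hgc, hfB] with ω h1 h2
    rw [Pi.mul_apply, abs_mul]
    exact mul_le_mul h1 h2 (abs_nonneg _) hB
  have key := condExp_mul_of_stronglyMeasurable_left (μ := m) (m := F)
    (stronglyMeasurable_condExp (f := g)) h1 hfint
  calc ∫ ω, (m[g|F]) ω * f ω ∂m = ∫ ω, (m[g|F] * f) ω ∂m := rfl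
    _ = ∫ ω, (m[(m[g|F] * f)|F]) ω ∂m := (integral_condExp hF).symm
    _ = ∫ ω, (m[g|F] * m[f|F]) ω ∂m := integral_congr_ae key
    _ = _ := rfl

lemma condexp_eq_of_div {F : MeasurableSpace Ω} {f g : Ω → ℝ} {r : ℝ} (hr : r ≠ 0)
    (h : m[(fun ω => f ω / r)|F] =ᵐ[m] m[(fun ω => g ω / r)|F]) : m[f|F] =ᵐ[m] m[g|F] := by
  have hf : f = r • fun ω => f ω / r := by
    funext ω; simp only [Pi.smul_apply, smul_eq_mul]; field_simp
  have hg : g = r • fun ω => g ω / r := by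
    funext ω; simp only [Pi.smul_apply, smul_eq_mul]; field_simp
  calc m[f|F] = m[r • fun ω => f ω / r|F] := by rw [← hf]
    _ =ᵐ[m] r • m[(fun ω => f ω / r)|F] := condExp_smul r _ F
    _ =ᵐ[m] r • m[(fun ω => g ω / r)|F] := by
        filter_upwards [h] with ω hω; simp [hω]
    _ =ᵐ[m] m[r • fun ω => g ω / r|F] := (condExp_smul r _ F).symm
    _ = m[g|F] := by rw [← hg]

noncomputable def clamp (B : ℝ) : ℝ → ℝ := fun x => max (-B) (min B x)

lemma measurable_clamp (B : ℝ) : Measurable (clamp B) :=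
  measurable_const.max (measurable_const.min measurable_id)

lemma clamp_abs_le {B : ℝ} (hB : 0 ≤ B) (x : ℝ) : |clamp B x| ≤ B := by
  rw [abs_le]
  constructor
  · exact le_max_left _ _
  · exact max_le (by linarith) (min_le_left _ _)

lemma clamp_eq {B x : ℝ} (h : |x| ≤ B) : clamp B x = x := by
  rw [abs_le] at h
  rw [clamp, min_eq_right h.2, max_eq_right h.1]

end WLLNAux

open WLLNAux in
theorem wlln_bounded_conditionally_exchangeable
    (Ω : ℕ → Type*) [inst : ∀ n, MeasurableSpace (Ω n)]
    (μ : ∀ n, Measure (Ω n)) [∀ n, IsProbabilityMeasure (μ n)]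
    (F : ∀ n, MeasurableSpace (Ω n)) (hF : ∀ n, F n ≤ inst n)
    (X : ∀ n, ℕ → Ω n → ℝ)
    (hmeas : ∀ n i, Measurable (X n i))
    (B : ℝ) (hB : 0 < B)
    (hbdd : ∀ n, ∀ i < n, ∀ᵐ ω ∂(μ n), |X n i ω| ≤ B)
    -- conditional exchangeability of `(X_{n,0}, …, X_{n,n-1})` given `F n`
    (hexch : ∀ n, ∀ σ : Equiv.Perm ℕ, (∀ k, n ≤ k → σ k = k) →
      ∀ g : (ℕ → ℝ) → ℝ, Measurable g → (∀ w, |g w| ≤ 1) →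
        (μ n)[(fun ω => g (fun i => X n (σ i) ω)) | F n]
          =ᵐ[μ n] (μ n)[(fun ω => g (fun i => X n i ω)) | F n])
    -- vanishing conditional covariances
    (hcov : ∀ i j : ℕ, i ≠ j → ∀ ε > (0 : ℝ),
      Tendsto (fun n => ((μ n) {ω | ε <
          |((μ n)[(fun ω' => X n i ω' * X n j ω') | F n]) ω
            - ((μ n)[X n i | F n]) ω * ((μ n)[X n j | F n]) ω|}).toReal)
        atTop (nhds 0)) :
    ∀ ε > (0 : ℝ),
      Tendsto (fun n => ((μ n) {ω | ε <
          |(∑ i ∈ Finset.range n, X n i ω) / n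
            - ((μ n)[(fun ω' => (∑ i ∈ Finset.range n, X n i ω') / n) | F n]) ω|}).toReal)
        atTop (nhds 0) := by
  intro ε hε
  classical
  letI inst' : ∀ n, MeasurableSpace (Ω n) := inst
  have hmeas' : ∀ n i, Measurable[inst n] (X n i) := fun n i => (hmeas n i).mono (hF n) le_rfl
  set C : ∀ n, Ω n → ℝ := fun n ω =>
    ((μ n)[(fun ω' => X n 0 ω' * X n 1 ω') | F n]) ω
      - ((μ n)[X n 0 | F n]) ω * ((μ n)[X n 1 | F n]) ω with hCdef
  set K : ℕ → ℝ := fun n => ∫ ω, |C n ω| ∂(μ n) with hKdef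
  -- Step C : the expected absolute conditional covariance tends to 0
  have hK0 : Tendsto K atTop (nhds 0) := by
    rw [Metric.tendsto_atTop]
    intro η hη
    have hq := hcov 0 1 (by norm_num) (η / 2) (by positivity)
    have hq2 : ∀ᶠ n in atTop, 2 * B ^ 2 * ((μ n) {ω | η / 2 <
        |((μ n)[(fun ω' => X n 0 ω' * X n 1 ω') | F n]) ω
          - ((μ n)[X n 0 | F n]) ω * ((μ n)[X n 1 | F n]) ω|}).toReal < η / 2 := by
      have h' := hq.const_mul (2 * B ^ 2)
      rw [mul_zero] at h'
      exact h'.eventually_lt_const (by positivity)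
    rw [eventually_atTop] at hq2
    obtain ⟨N₁, hN₁⟩ := hq2
    refine ⟨max N₁ 2, fun n hn => ?_⟩
    have h2 : 2 ≤ n := le_trans (le_max_right _ _) hn
    have hKnn : 0 ≤ K n := integral_nonneg fun ω => abs_nonneg _
    rw [Real.dist_eq, sub_zero, abs_of_nonneg hKnn]
    -- bounds on the conditional covariance
    have hX0 : ∀ᵐ ω ∂(μ n), |X n 0 ω| ≤ B := hbdd n 0 (by omega)
    have hX1 : ∀ᵐ ω ∂(μ n), |X n 1 ω| ≤ B := hbdd n 1 (by omega)
    have hP : ∀ᵐ ω ∂(μ n), |X n 0 ω * X n 1 ω| ≤ B ^ 2 := by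
      filter_upwards [hX0, hX1] with ω h0 h1
      rw [abs_mul, sq]
      exact mul_le_mul h0 h1 (abs_nonneg _) hB.le
    have hc1 : ∀ᵐ ω ∂(μ n), |((μ n)[(fun ω' => X n 0 ω' * X n 1 ω') | F n]) ω| ≤ B ^ 2 :=
      condexp_ae_bdd (m0 := inst n) (sq_nonneg B) hP
    have hc2 : ∀ᵐ ω ∂(μ n), |((μ n)[X n 0 | F n]) ω| ≤ B :=
      condexp_ae_bdd (m0 := inst n) hB.le hX0
    have hc3 : ∀ᵐ ω ∂(μ n), |((μ n)[X n 1 | F n]) ω| ≤ B :=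
      condexp_ae_bdd (m0 := inst n) hB.le hX1
    have hCb : ∀ᵐ ω ∂(μ n), |C n ω| ≤ 2 * B ^ 2 := by
      filter_upwards [hc1, hc2, hc3] with ω h1 h2' h3
      simp only [hCdef]
      calc |((μ n)[(fun ω' => X n 0 ω' * X n 1 ω') | F n]) ω
            - ((μ n)[X n 0 | F n]) ω * ((μ n)[X n 1 | F n]) ω|
          ≤ |((μ n)[(fun ω' => X n 0 ω' * X n 1 ω') | F n]) ω|
            + |((μ n)[X n 0 | F n]) ω * ((μ n)[X n 1 | F n]) ω| := abs_sub _ _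
        _ ≤ B ^ 2 + B * B := by
            refine add_le_add h1 ?_
            rw [abs_mul]
            exact mul_le_mul h2' h3 (abs_nonneg _) hB.le
        _ = 2 * B ^ 2 := by ring
    have hCmeas : Measurable[inst n] (C n) := by
      rw [hCdef]
      exact ((stronglyMeasurable_condExp.mono (hF n)).measurable).sub
        (((stronglyMeasurable_condExp.mono (hF n)).measurable).mul
          ((stronglyMeasurable_condExp.mono (hF n)).measurable))
    set s : Set (Ω n) := {ω | η / 2 < |C n ω|} with hsdef
    have hs : MeasurableSet[inst n] s := measurableSet_lt measurable_const hCmeas.abs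
    have hint : Integrable (fun ω => |C n ω|) (μ n) := by
      refine integrable_of_ae_bdd (m0 := inst n) hCmeas.abs.aestronglyMeasurable
        (B := 2 * B ^ 2) ?_
      filter_upwards [hCb] with ω hω using by rwa [abs_abs]
    have hintR : Integrable (fun ω => η / 2 + s.indicator (fun _ => 2 * B ^ 2) ω) (μ n) :=
      (integrable_const _).add ((integrable_const _).indicator hs)
    have hKle : K n ≤ η / 2 + 2 * B ^ 2 * ((μ n) s).toReal := by
      have hsplit : ∫ ω, (η / 2 + s.indicator (fun _ => 2 * B ^ 2) ω) ∂(μ n)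
          = (∫ _ω, η / 2 ∂(μ n)) + ∫ ω, s.indicator (fun _ => 2 * B ^ 2) ω ∂(μ n) :=
        integral_add (integrable_const _) ((integrable_const _).indicator hs)
      have hmono : K n ≤ ∫ ω, (η / 2 + s.indicator (fun _ => 2 * B ^ 2) ω) ∂(μ n) := by
        refine integral_mono_ae hint hintR ?_
        filter_upwards [hCb] with ω hω
        by_cases hωs : ω ∈ s
        · rw [Set.indicator_of_mem hωs]
          linarith
        · rw [Set.indicator_of_notMem hωs]
          rw [hsdef] at hωs
          simp only [Set.mem_setOf_eq, not_lt] at hωs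
          linarith
      rw [hsplit, integral_const, integral_indicator_const _ hs] at hmono
      simpa [measure_univ, mul_comm, measureReal_def] using hmono
    have hfin := hN₁ n (le_trans (le_max_left _ _) hn)
    have hseq : ((μ n) s).toReal = ((μ n) {ω | η / 2 <
        |((μ n)[(fun ω' => X n 0 ω' * X n 1 ω') | F n]) ω
          - ((μ n)[X n 0 | F n]) ω * ((μ n)[X n 1 | F n]) ω|}).toReal := by
      rw [hsdef, hCdef]
    rw [hseq] at hKle
    linarith
  -- Step B : Chebyshev bound
  have hKey : ∀ n, 2 ≤ n → ((μ n) {ω | ε <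
      |(∑ i ∈ Finset.range n, X n i ω) / n
        - ((μ n)[(fun ω' => (∑ i ∈ Finset.range n, X n i ω') / n) | F n]) ω|}).toReal
      ≤ (B ^ 2 / n + K n) / ε ^ 2 := by
    intro n hn
    have hn0 : (0:ℝ) < n := by exact_mod_cast (by omega : 0 < n)
    have hKnn : 0 ≤ K n := integral_nonneg fun ω => abs_nonneg _
    set T : Ω n → ℝ := fun ω => (∑ i ∈ Finset.range n, X n i ω) / n with hTdef
    set E : Ω n → ℝ := (μ n)[T | F n] with hEdef
    -- basic facts
    have hTmeas : Measurable[inst n] T := by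
      rw [hTdef]
      exact Measurable.div_const (Finset.measurable_sum (m := inst n) _ fun i _ => hmeas' n i) _
    have hXb : ∀ᵐ ω ∂(μ n), ∀ i ∈ Finset.range n, |X n i ω| ≤ B :=
      (ae_ball_iff (Finset.range n).countable_toSet).2
        (fun i hi => hbdd n i (Finset.mem_range.1 hi))
    have hTb : ∀ᵐ ω ∂(μ n), |T ω| ≤ B := by
      filter_upwards [hXb] with ω hω
      rw [hTdef]
      have h1 : |∑ i ∈ Finset.range n, X n i ω| ≤ n * B := by
        calc |∑ i ∈ Finset.range n, X n i ω| ≤ ∑ i ∈ Finset.range n, |X n i ω| :=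
              Finset.abs_sum_le_sum_abs _ _
          _ ≤ ∑ _i ∈ Finset.range n, B := Finset.sum_le_sum hω
          _ = n * B := by rw [Finset.sum_const, Finset.card_range, nsmul_eq_mul]
      rw [abs_div, abs_of_pos hn0, div_le_iff₀ hn0]
      linarith
    have hEb : ∀ᵐ ω ∂(μ n), |E ω| ≤ B := by
      rw [hEdef]; exact condexp_ae_bdd (m0 := inst n) hB.le hTb
    have hEmeas : Measurable[inst n] E := by
      rw [hEdef]; exact (stronglyMeasurable_condExp.mono (hF n)).measurable
    have hT2int : Integrable (fun ω => T ω ^ 2) (μ n) := by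
      refine integrable_of_ae_bdd (m0 := inst n)
        (hTmeas.pow_const 2).aestronglyMeasurable (B := B ^ 2) ?_
      filter_upwards [hTb] with ω hω
      rw [abs_pow]
      exact pow_le_pow_left₀ (abs_nonneg _) hω 2
    have hE2int : Integrable (fun ω => E ω ^ 2) (μ n) := by
      refine integrable_of_ae_bdd (m0 := inst n)
        (hEmeas.pow_const 2).aestronglyMeasurable (B := B ^ 2) ?_
      filter_upwards [hEb] with ω hω
      rw [abs_pow]
      exact pow_le_pow_left₀ (abs_nonneg _) hω 2
    have hETint : Integrable (fun ω => E ω * T ω) (μ n) := by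
      refine integrable_of_ae_bdd (m0 := inst n)
        (hEmeas.mul hTmeas).aestronglyMeasurable (B := B ^ 2) ?_
      filter_upwards [hTb, hEb] with ω h1 h2
      rw [abs_mul, sq]
      exact mul_le_mul h2 h1 (abs_nonneg _) hB.le
    have hD2int : Integrable (fun ω => (T ω - E ω) ^ 2) (μ n) := by
      refine integrable_of_ae_bdd (m0 := inst n)
        ((hTmeas.sub hEmeas).pow_const 2).aestronglyMeasurable (B := (2*B) ^ 2) ?_
      filter_upwards [hTb, hEb] with ω h1 h2
      rw [abs_pow]
      refine pow_le_pow_left₀ (abs_nonneg _) ?_ 2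
      calc |T ω - E ω| ≤ |T ω| + |E ω| := abs_sub _ _
        _ ≤ 2 * B := by linarith
    -- Chebyshev
    have hcheb := mul_meas_ge_le_integral_of_nonneg (μ := μ n)
      (f := fun ω => (T ω - E ω) ^ 2)
      (Eventually.of_forall fun ω => sq_nonneg _) hD2int (ε ^ 2)
    have hsub : {ω | ε < |T ω - E ω|} ⊆ {ω | ε ^ 2 ≤ (T ω - E ω) ^ 2} := by
      intro ω hω
      rw [Set.mem_setOf_eq] at hω ⊢
      calc ε ^ 2 ≤ |T ω - E ω| ^ 2 := pow_le_pow_left₀ hε.le hω.le 2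
        _ = (T ω - E ω) ^ 2 := sq_abs _
    have step1 : ((μ n) {ω | ε < |T ω - E ω|}).toReal
        ≤ ((μ n) {ω | ε ^ 2 ≤ (T ω - E ω) ^ 2}).toReal :=
      ENNReal.toReal_mono (measure_ne_top _ _) (measure_mono hsub)
    have step2 : ((μ n) {ω | ε ^ 2 ≤ (T ω - E ω) ^ 2}).toReal
        ≤ (∫ ω, (T ω - E ω) ^ 2 ∂(μ n)) / ε ^ 2 := by
      rw [le_div_iff₀ (by positivity)]
      rw [measureReal_def] at hcheb
      linarith
    -- exchangeability consequences
    have hxch : ∀ i j : ℕ, i < n → j < n → i ≠ j →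
        ((μ n)[(fun ω => X n i ω * X n j ω) | F n]
            =ᵐ[μ n] (μ n)[(fun ω => X n 0 ω * X n 1 ω) | F n])
        ∧ ((μ n)[X n i | F n] =ᵐ[μ n] (μ n)[X n 0 | F n])
        ∧ ((μ n)[X n j | F n] =ᵐ[μ n] (μ n)[X n 1 | F n]) := by
      intro i j hi hj hij
      set j' : ℕ := Equiv.swap 0 i j with hj'def
      have hj'0 : j' ≠ 0 := by
        intro h
        apply hij
        have h2 := congrArg (Equiv.swap 0 i) h
        rw [hj'def] at h2
        rwa [Equiv.swap_apply_self, Equiv.swap_apply_left, eq_comm] at h2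
      have hj'lt : j' < n := by
        rcases eq_or_ne j 0 with h0 | h0
        · rw [hj'def, h0, Equiv.swap_apply_left]
          exact hi
        · rw [hj'def, Equiv.swap_apply_of_ne_of_ne h0 (Ne.symm hij)]
          exact hj
      set σ : Equiv.Perm ℕ := (Equiv.swap 1 j').trans (Equiv.swap 0 i) with hσdef
      have hσ0 : σ 0 = i := by
        rw [hσdef]
        simp only [Equiv.trans_apply]
        rw [Equiv.swap_apply_of_ne_of_ne (by omega) (Ne.symm hj'0), Equiv.swap_apply_left]
      have hσ1 : σ 1 = j := by
        rw [hσdef]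
        simp only [Equiv.trans_apply]
        rw [Equiv.swap_apply_left, hj'def, Equiv.swap_apply_self]
      have hσfix : ∀ k, n ≤ k → σ k = k := by
        intro k hk
        rw [hσdef]
        simp only [Equiv.trans_apply]
        rw [Equiv.swap_apply_of_ne_of_ne (show k ≠ 1 by omega) (show k ≠ j' by omega),
          Equiv.swap_apply_of_ne_of_ne (show k ≠ 0 by omega) (show k ≠ i by omega)]
      have hB2 : (0:ℝ) < B ^ 2 := by positivity
      refine ⟨?_, ?_, ?_⟩
      · -- products
        have hg2meas : Measurable (fun w : ℕ → ℝ => clamp B (w 0) * clamp B (w 1) / B ^ 2) :=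
          (((measurable_clamp B).comp (measurable_pi_apply 0)).mul
            ((measurable_clamp B).comp (measurable_pi_apply 1))).div_const _
        have hg2b : ∀ w : ℕ → ℝ, |clamp B (w 0) * clamp B (w 1) / B ^ 2| ≤ 1 := by
          intro w
          rw [abs_div, abs_of_pos hB2, div_le_one hB2, abs_mul, sq]
          exact mul_le_mul (clamp_abs_le hB.le _) (clamp_abs_le hB.le _) (abs_nonneg _) hB.le
        have he := hexch n σ hσfix _ hg2meas hg2b
        simp only [hσ0, hσ1] at he
        refine condexp_eq_of_div (m0 := inst n) (r := B ^ 2) hB2.ne' ?_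
        calc (μ n)[(fun ω => X n i ω * X n j ω / B ^ 2) | F n]
            =ᵐ[μ n] (μ n)[(fun ω => clamp B (X n i ω) * clamp B (X n j ω) / B ^ 2) | F n] := by
              refine condExp_congr_ae ?_
              filter_upwards [hbdd n i hi, hbdd n j hj] with ω h1 h2
              rw [clamp_eq h1, clamp_eq h2]
          _ =ᵐ[μ n] (μ n)[(fun ω => clamp B (X n 0 ω) * clamp B (X n 1 ω) / B ^ 2) | F n] := he
          _ =ᵐ[μ n] (μ n)[(fun ω => X n 0 ω * X n 1 ω / B ^ 2) | F n] := by
              refine condExp_congr_ae ?_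
              filter_upwards [hbdd n 0 (by omega), hbdd n 1 (by omega)] with ω h1 h2
              rw [clamp_eq h1, clamp_eq h2]
      · -- coordinate 0
        have hgmeas : Measurable (fun w : ℕ → ℝ => clamp B (w 0) / B) :=
          ((measurable_clamp B).comp (measurable_pi_apply 0)).div_const _
        have hgb : ∀ w : ℕ → ℝ, |clamp B (w 0) / B| ≤ 1 := by
          intro w
          rw [abs_div, abs_of_pos hB, div_le_one hB]
          exact clamp_abs_le hB.le _
        have he := hexch n σ hσfix _ hgmeas hgb
        simp only [hσ0] at he
        refine condexp_eq_of_div (m0 := inst n) (r := B) hB.ne' ?_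
        calc (μ n)[(fun ω => X n i ω / B) | F n]
            =ᵐ[μ n] (μ n)[(fun ω => clamp B (X n i ω) / B) | F n] := by
              refine condExp_congr_ae ?_
              filter_upwards [hbdd n i hi] with ω h1
              rw [clamp_eq h1]
          _ =ᵐ[μ n] (μ n)[(fun ω => clamp B (X n 0 ω) / B) | F n] := he
          _ =ᵐ[μ n] (μ n)[(fun ω => X n 0 ω / B) | F n] := by
              refine condExp_congr_ae ?_
              filter_upwards [hbdd n 0 (by omega)] with ω h1
              rw [clamp_eq h1]
      · -- coordinate 1
        have hgmeas : Measurable (fun w : ℕ → ℝ => clamp B (w 1) / B) :=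
          ((measurable_clamp B).comp (measurable_pi_apply 1)).div_const _
        have hgb : ∀ w : ℕ → ℝ, |clamp B (w 1) / B| ≤ 1 := by
          intro w
          rw [abs_div, abs_of_pos hB, div_le_one hB]
          exact clamp_abs_le hB.le _
        have he := hexch n σ hσfix _ hgmeas hgb
        simp only [hσ1] at he
        refine condexp_eq_of_div (m0 := inst n) (r := B) hB.ne' ?_
        calc (μ n)[(fun ω => X n j ω / B) | F n]
            =ᵐ[μ n] (μ n)[(fun ω => clamp B (X n j ω) / B) | F n] := by
              refine condExp_congr_ae ?_
              filter_upwards [hbdd n j hj] with ω h1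
              rw [clamp_eq h1]
          _ =ᵐ[μ n] (μ n)[(fun ω => clamp B (X n 1 ω) / B) | F n] := he
          _ =ᵐ[μ n] (μ n)[(fun ω => X n 1 ω / B) | F n] := by
              refine condExp_congr_ae ?_
              filter_upwards [hbdd n 1 (by omega)] with ω h1
              rw [clamp_eq h1]
    -- integral identity and bounds
    have step3 : ∫ ω, (T ω - E ω) ^ 2 ∂(μ n) ≤ B ^ 2 / n + K n := by
      have hXint : ∀ i ∈ Finset.range n, Integrable (X n i) (μ n) := fun i hi =>
        integrable_of_ae_bdd (m0 := inst n) (hmeas' n i).aestronglyMeasurable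
          (hbdd n i (Finset.mem_range.1 hi))
      have hprodb : ∀ i ∈ Finset.range n, ∀ j ∈ Finset.range n,
          ∀ᵐ ω ∂(μ n), |X n i ω * X n j ω| ≤ B ^ 2 := by
        intro i hi j hj
        filter_upwards [hbdd n i (Finset.mem_range.1 hi), hbdd n j (Finset.mem_range.1 hj)]
          with ω h1 h2
        rw [abs_mul, sq]
        exact mul_le_mul h1 h2 (abs_nonneg _) hB.le
      have hprodint : ∀ i ∈ Finset.range n, ∀ j ∈ Finset.range n,
          Integrable (fun ω => X n i ω * X n j ω) (μ n) := fun i hi j hj =>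
        integrable_of_ae_bdd (m0 := inst n)
          ((hmeas' n i).mul (hmeas' n j)).aestronglyMeasurable (hprodb i hi j hj)
      have hcondb : ∀ i ∈ Finset.range n, ∀ᵐ ω ∂(μ n), |((μ n)[X n i | F n]) ω| ≤ B :=
        fun i hi => condexp_ae_bdd (m0 := inst n) hB.le (hbdd n i (Finset.mem_range.1 hi))
      have hcondmeas : ∀ i : ℕ, Measurable[inst n] ((μ n)[X n i | F n]) := fun i =>
        (stronglyMeasurable_condExp.mono (hF n)).measurable
      have hcondprodint : ∀ i ∈ Finset.range n, ∀ j ∈ Finset.range n,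
          Integrable (fun ω => ((μ n)[X n i | F n]) ω * ((μ n)[X n j | F n]) ω) (μ n) := by
        intro i hi j hj
        refine integrable_of_ae_bdd (m0 := inst n)
          ((hcondmeas i).mul (hcondmeas j)).aestronglyMeasurable (B := B ^ 2) ?_
        filter_upwards [hcondb i hi, hcondb j hj] with ω h1 h2
        rw [abs_mul, sq]
        exact mul_le_mul h1 h2 (abs_nonneg _) hB.le
      -- ∫ E·T = ∫ E·E
      have hET : ∫ ω, E ω * T ω ∂(μ n) = ∫ ω, E ω * E ω ∂(μ n) := by
        rw [hEdef]
        exact integral_condexp_mul (m0 := inst n) (hF n) hTmeas.aestronglyMeasurable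
          hB.le hTb hTb
      -- decompose the square
      have hdecomp : ∫ ω, (T ω - E ω) ^ 2 ∂(μ n)
          = ∫ ω, T ω ^ 2 ∂(μ n) - ∫ ω, E ω ^ 2 ∂(μ n) := by
        have h1 : (fun ω => (T ω - E ω) ^ 2)
            = fun ω => (T ω ^ 2 - 2 * (E ω * T ω)) + E ω ^ 2 := by
          funext ω; ring
        have hint1 : Integrable (fun ω => T ω ^ 2 - 2 * (E ω * T ω)) (μ n) :=
          hT2int.sub (hETint.const_mul 2)
        have hint2 : Integrable (fun ω => 2 * (E ω * T ω)) (μ n) := hETint.const_mul 2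
        rw [h1, integral_add hint1 hE2int, integral_sub hT2int hint2,
          integral_const_mul, hET]
        have h2 : ∫ ω, E ω * E ω ∂(μ n) = ∫ ω, E ω ^ 2 ∂(μ n) := by
          congr 1; funext ω; ring
        rw [h2]; ring
      -- expand ∫ T²
      have hT2 : ∫ ω, T ω ^ 2 ∂(μ n)
          = (∑ i ∈ Finset.range n, ∑ j ∈ Finset.range n,
              ∫ ω, X n i ω * X n j ω ∂(μ n)) / (n:ℝ) ^ 2 := by
        have h1 : (fun ω => T ω ^ 2) = fun ω =>
            (∑ i ∈ Finset.range n, ∑ j ∈ Finset.range n, X n i ω * X n j ω) / (n:ℝ) ^ 2 := by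
          funext ω
          rw [hTdef]
          rw [div_pow, pow_two (∑ i ∈ Finset.range n, X n i ω), Finset.sum_mul_sum]
        rw [h1, integral_div]
        congr 1
        rw [integral_finset_sum _ fun i hi =>
          integrable_finset_sum _ fun j hj => hprodint i hi j hj]
        exact Finset.sum_congr rfl fun i hi =>
          integral_finset_sum _ fun j hj => hprodint i hi j hj
      -- expand ∫ E²
      have hEsum : E =ᵐ[μ n]
          fun ω => (∑ i ∈ Finset.range n, ((μ n)[X n i | F n]) ω) / n := by
        have hTs : T = (n:ℝ)⁻¹ • (∑ i ∈ Finset.range n, X n i) := by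
          funext ω
          rw [hTdef]
          simp [Finset.sum_apply, div_eq_inv_mul]
        have h3 := condExp_finsetSum (μ := μ n) (m := F n) hXint
        have h4 := condExp_smul (μ := μ n) (m := F n) ((n:ℝ)⁻¹)
          (∑ i ∈ Finset.range n, X n i)
        calc E = (μ n)[(n:ℝ)⁻¹ • (∑ i ∈ Finset.range n, X n i) | F n] := by rw [hEdef, hTs]
          _ =ᵐ[μ n] (n:ℝ)⁻¹ • (μ n)[(∑ i ∈ Finset.range n, X n i) | F n] := h4
          _ =ᵐ[μ n] fun ω => (∑ i ∈ Finset.range n, ((μ n)[X n i | F n]) ω) / n := by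
              filter_upwards [h3] with ω hω
              rw [Pi.smul_apply, smul_eq_mul, hω, Finset.sum_apply, div_eq_inv_mul]
      have hE2 : ∫ ω, E ω ^ 2 ∂(μ n)
          = (∑ i ∈ Finset.range n, ∑ j ∈ Finset.range n,
              ∫ ω, ((μ n)[X n i | F n]) ω * ((μ n)[X n j | F n]) ω ∂(μ n)) / (n:ℝ) ^ 2 := by
        have h1 : (fun ω => E ω ^ 2) =ᵐ[μ n] fun ω =>
            (∑ i ∈ Finset.range n, ∑ j ∈ Finset.range n,
              ((μ n)[X n i | F n]) ω * ((μ n)[X n j | F n]) ω) / (n:ℝ) ^ 2 := by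
          filter_upwards [hEsum] with ω hω
          rw [hω, div_pow, pow_two (∑ i ∈ Finset.range n, ((μ n)[X n i | F n]) ω),
            Finset.sum_mul_sum]
        rw [integral_congr_ae h1, integral_div]
        congr 1
        rw [integral_finset_sum _ fun i hi =>
          integrable_finset_sum _ fun j hj => hcondprodint i hi j hj]
        exact Finset.sum_congr rfl fun i hi =>
          integral_finset_sum _ fun j hj => hcondprodint i hi j hj
      -- per-term bound
      have h0n : (0:ℕ) ∈ Finset.range n := Finset.mem_range.2 (by omega)
      have h1n : (1:ℕ) ∈ Finset.range n := Finset.mem_range.2 (by omega)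
      have hCint : Integrable (C n) (μ n) := by
        simp only [hCdef]
        exact integrable_condExp.sub (hcondprodint 0 h0n 1 h1n)
      have hterm : ∀ i ∈ Finset.range n, ∀ j ∈ Finset.range n,
          ∫ ω, X n i ω * X n j ω ∂(μ n)
            - ∫ ω, ((μ n)[X n i | F n]) ω * ((μ n)[X n j | F n]) ω ∂(μ n)
          ≤ (if i = j then B ^ 2 else 0) + K n := by
        intro i hi j hj
        by_cases hij : i = j
        · subst hij
          rw [if_pos rfl]
          have h1 : ∫ ω, X n i ω * X n i ω ∂(μ n) ≤ B ^ 2 := by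
            have hmono := integral_mono_ae (hprodint i hi i hi) (integrable_const (B ^ 2))
              (by filter_upwards [hprodb i hi i hi] with ω h using le_trans (le_abs_self _) h)
            simpa using hmono
          have h2 : 0 ≤ ∫ ω, ((μ n)[X n i | F n]) ω * ((μ n)[X n i | F n]) ω ∂(μ n) :=
            integral_nonneg fun ω => mul_self_nonneg _
          linarith
        · rw [if_neg hij, zero_add]
          obtain ⟨e1, e2, e3⟩ := hxch i j (Finset.mem_range.1 hi) (Finset.mem_range.1 hj) hij
          have hA : ∫ ω, X n i ω * X n j ω ∂(μ n)
              = ∫ ω, ((μ n)[(fun ω' => X n 0 ω' * X n 1 ω') | F n]) ω ∂(μ n) := by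
            calc ∫ ω, X n i ω * X n j ω ∂(μ n)
                = ∫ ω, ((μ n)[(fun ω' => X n i ω' * X n j ω') | F n]) ω ∂(μ n) :=
                  (integral_condExp (hF n)).symm
              _ = _ := integral_congr_ae e1
          have hBe : ∫ ω, ((μ n)[X n i | F n]) ω * ((μ n)[X n j | F n]) ω ∂(μ n)
              = ∫ ω, ((μ n)[X n 0 | F n]) ω * ((μ n)[X n 1 | F n]) ω ∂(μ n) :=
            integral_congr_ae (e2.mul e3)
          rw [hA, hBe]
          have h4 : ∫ ω, ((μ n)[(fun ω' => X n 0 ω' * X n 1 ω') | F n]) ω ∂(μ n)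
              - ∫ ω, ((μ n)[X n 0 | F n]) ω * ((μ n)[X n 1 | F n]) ω ∂(μ n)
              = ∫ ω, C n ω ∂(μ n) := by
            simp only [hCdef]
            exact (integral_sub integrable_condExp (hcondprodint 0 h0n 1 h1n)).symm
          rw [h4, hKdef]
          exact integral_mono_ae hCint hCint.abs (Eventually.of_forall fun ω => le_abs_self _)
      -- assemble the sums
      have hsum_le : ∑ i ∈ Finset.range n, ∑ j ∈ Finset.range n,
          (∫ ω, X n i ω * X n j ω ∂(μ n)
            - ∫ ω, ((μ n)[X n i | F n]) ω * ((μ n)[X n j | F n]) ω ∂(μ n))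
          ≤ n * B ^ 2 + (n:ℝ) ^ 2 * K n := by
        calc ∑ i ∈ Finset.range n, ∑ j ∈ Finset.range n,
            (∫ ω, X n i ω * X n j ω ∂(μ n)
              - ∫ ω, ((μ n)[X n i | F n]) ω * ((μ n)[X n j | F n]) ω ∂(μ n))
            ≤ ∑ i ∈ Finset.range n, ∑ j ∈ Finset.range n,
              ((if i = j then B ^ 2 else 0) + K n) :=
              Finset.sum_le_sum fun i hi => Finset.sum_le_sum fun j hj => hterm i hi j hj
          _ = n * B ^ 2 + (n:ℝ) ^ 2 * K n := by
              have inner : ∀ i ∈ Finset.range n,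
                  ∑ j ∈ Finset.range n, ((if i = j then B ^ 2 else 0) + K n)
                    = B ^ 2 + n * K n := by
                intro i hi
                rw [Finset.sum_add_distrib, Finset.sum_const, Finset.card_range,
                  nsmul_eq_mul, Finset.sum_ite_eq, if_pos hi]
              rw [Finset.sum_congr rfl inner, Finset.sum_add_distrib, Finset.sum_const,
                Finset.card_range, nsmul_eq_mul, Finset.sum_const, Finset.card_range,
                nsmul_eq_mul]
              ring
      have hfinal : ∫ ω, (T ω - E ω) ^ 2 ∂(μ n)
          ≤ (n * B ^ 2 + (n:ℝ) ^ 2 * K n) / (n:ℝ) ^ 2 := by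
        rw [hdecomp, hT2, hE2, div_sub_div_same, ← Finset.sum_sub_distrib]
        simp_rw [← Finset.sum_sub_distrib]
        exact (div_le_div_iff_of_pos_right (by positivity)).2 hsum_le
      calc ∫ ω, (T ω - E ω) ^ 2 ∂(μ n) ≤ (n * B ^ 2 + (n:ℝ) ^ 2 * K n) / (n:ℝ) ^ 2 := hfinal
        _ = B ^ 2 / n + K n := by field_simp
    refine le_trans step1 (le_trans step2 ?_)
    exact (div_le_div_iff_of_pos_right (by positivity)).2 step3
  -- assemble
  have hbnd : Tendsto (fun n : ℕ => (B ^ 2 / n + K n) / ε ^ 2) atTop (nhds 0) := by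
    have h1 := (tendsto_const_div_atTop_nhds_zero_nat (B ^ 2)).add hK0
    rw [add_zero] at h1
    simpa using h1.div_const (ε ^ 2)
  refine tendsto_of_tendsto_of_tendsto_of_le_of_le' tendsto_const_nhds hbnd
    (Eventually.of_forall fun n => ENNReal.toReal_nonneg) ?_
  filter_upwards [eventually_ge_atTop 2] with n hn using hKey n hn
end

section
/- Consistency of the generalized left inverse under monotonicity: Let (φ_n) be random functions ℝ → ℝ and let φ : ℝ → ℝ be deterministic, continuous, and strictly decreasing. Assume that for every C ∈ ℝ, sup_{x < C} |φ_n(x) − φ(x)| → 0 in probability. Fix a level t that is attained by φ, and let θ := inf{x ∈ ℝ : φ(x) ≤ t} < ∞. Then the random generalized left inverse φ_n⁻(t) := inf{x ∈ ℝ : φ_n(x) ≤ t} converges in probability to θ. -/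
/-!
Consistency of the generalized left inverse under monotonicity:
for random functions `φ_n` converging to a continuous strictly decreasing `φ` uniformly on
half-lines `(−∞, C)` in probability, and a level `t` attained by `φ` with
`θ = inf{x : φ(x) ≤ t}`, the generalized left inverse `φ_n⁻(t) = inf{x : φ_n(x) ≤ t}`
(computed in the extended reals, so that `inf ∅ = ∞`) converges in probability to `θ`.
-/

open MeasureTheory Filter

/-- Generalized left inverse `φ⁻(t) = inf{x : φ(x) ≤ t}`, valued in the extended reals
(so the infimum of the empty set is `⊤ = ∞`). -/
noncomputable def leftInvE (φ : ℝ → ℝ) (t : ℝ) : EReal :=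
  ⨅ x ∈ {x : ℝ | φ x ≤ t}, (x : EReal)

theorem left_inverse_consistency
    (Ω : ℕ → Type*) [∀ n, MeasurableSpace (Ω n)]
    (μ : ∀ n, Measure (Ω n)) [∀ n, IsProbabilityMeasure (μ n)]
    (φn : ∀ n, Ω n → ℝ → ℝ) (φ : ℝ → ℝ)
    (hφcont : Continuous φ) (hφanti : StrictAnti φ)
    (hconv : ∀ C : ℝ, ∀ ε > (0 : ℝ),
      Tendsto (fun n => ((μ n) {ω | ∃ x < C, ε < |φn n ω x - φ x|}).toReal)
        atTop (nhds 0))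
    (t : ℝ) (hatt : ∃ x : ℝ, φ x = t) :
    ∀ δ > (0 : ℝ),
      Tendsto (fun n => ((μ n) {ω |
          leftInvE (φn n ω) t < ((sInf {x : ℝ | φ x ≤ t} - δ : ℝ) : EReal) ∨
          ((sInf {x : ℝ | φ x ≤ t} + δ : ℝ) : EReal) < leftInvE (φn n ω) t}).toReal)
        atTop (nhds 0) := by
  obtain ⟨x₀, hx₀⟩ := hatt
  have hθ : sInf {x : ℝ | φ x ≤ t} = x₀ := by
    have hS : {x : ℝ | φ x ≤ t} = Set.Ici x₀ := by
      ext x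
      simp only [Set.mem_setOf_eq, Set.mem_Ici, ← hx₀, hφanti.le_iff_ge]
    rw [hS, csInf_Ici]
  intro δ hδ
  have hε₁ : 0 < φ (x₀ - δ) - t := by
    have := hφanti (show x₀ - δ < x₀ by linarith)
    rw [hx₀] at this; linarith
  have hε₂ : 0 < t - φ (x₀ + δ/2) := by
    have := hφanti (show x₀ < x₀ + δ/2 by linarith)
    rw [hx₀] at this; linarith
  have hε : 0 < min (φ (x₀ - δ) - t) (t - φ (x₀ + δ/2)) := lt_min hε₁ hε₂
  have key := hconv (x₀ + δ) (min (φ (x₀ - δ) - t) (t - φ (x₀ + δ/2))) hε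
  refine squeeze_zero (fun n => ENNReal.toReal_nonneg) (fun n => ?_) key
  refine ENNReal.toReal_mono (measure_ne_top _ _) (measure_mono ?_)
  intro ω hω
  simp only [Set.mem_setOf_eq] at hω ⊢
  rw [hθ] at hω
  rcases hω with h | h
  · simp only [leftInvE, Set.mem_setOf_eq] at h
    obtain ⟨x, hx⟩ := iInf_lt_iff.mp h
    obtain ⟨hxS, hxlt⟩ := iInf_lt_iff.mp hx
    have hxlt' : x < x₀ - δ := by exact_mod_cast hxlt
    refine ⟨x, by linarith, ?_⟩
    have h1 : φ (x₀ - δ) < φ x := hφanti hxlt'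
    rw [abs_sub_comm]
    calc min (φ (x₀ - δ) - t) (t - φ (x₀ + δ/2)) ≤ φ (x₀ - δ) - t := min_le_left _ _
      _ < φ x - φn n ω x := by linarith
      _ ≤ |φ x - φn n ω x| := le_abs_self _
  · refine ⟨x₀ + δ/2, by linarith, ?_⟩
    have hn : t < φn n ω (x₀ + δ/2) := by
      by_contra hc
      push_neg at hc
      have hle : leftInvE (φn n ω) t ≤ ((x₀ + δ/2 : ℝ) : EReal) := by
        simp only [leftInvE, Set.mem_setOf_eq]
        exact iInf₂_le_of_le (x₀ + δ/2) hc le_rfl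
      have : ((x₀ + δ : ℝ) : EReal) < ((x₀ + δ/2 : ℝ) : EReal) := lt_of_lt_of_le h hle
      have : (x₀ + δ : ℝ) < x₀ + δ/2 := by exact_mod_cast this
      linarith
    calc min (φ (x₀ - δ) - t) (t - φ (x₀ + δ/2)) ≤ t - φ (x₀ + δ/2) := min_le_right _ _
      _ < φn n ω (x₀ + δ/2) - φ (x₀ + δ/2) := by linarith
      _ ≤ |φn n ω (x₀ + δ/2) - φ (x₀ + δ/2)| := le_abs_self _
end

section
/- Uniqueness of the proxy root for finite m̃ (point-mass prior): Fix C > 0, q ∈ (0,1), γ ∈ (0,1), and let μ : ℕ → ℝ satisfy μ(m̃) ≥ μ₋ for all m̃ and some constant μ₋ > 0. Define F(t; m̃) := [1/(1+m̃) + (m̃/(1+m̃))·Φ̄(t)] / [(1−γ)·Φ̄(t) + γ·Φ̄(t − μ(m̃))] − q. Then there exists m̃* ∈ ℕ such that for all m̃ > m̃*, the equation F(t; m̃) = 0 has at most one solution t ∈ (−∞, C]. Indeed, F(·; m̃) is strictly decreasing on (−∞, C] for all m̃ > m̃*. -/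
/-!
Uniqueness of the proxy root for finite m̃ (point-mass prior):
if `μ(m̃) ≥ μ₋ > 0` for all `m̃`, then there is `m̃*` such that for all `m̃ > m̃*` the proxy
FDP curve
`F(t; m̃) = [1/(1+m̃) + (m̃/(1+m̃))·Φ̄(t)] / [(1−γ)Φ̄(t) + γΦ̄(t − μ(m̃))] − q`
is strictly decreasing on `(−∞, C]`; in particular `F(·; m̃) = 0` has at most one solution
on `(−∞, C]`.
-/

open MeasureTheory ProbabilityTheory Filter

/-- The survival function `Φ̄` of the standard normal distribution. -/
noncomputable def stdNormSurvival (t : ℝ) : ℝ :=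
  ((gaussianReal 0 1) (Set.Ici t)).toReal

/-- The proxy FDP curve (minus the level `q`) for `m̃` synthetic nulls and mean shift `μ`. -/
noncomputable def proxyF (γ q μ : ℝ) (mt : ℕ) (t : ℝ) : ℝ :=
  (1 / (1 + (mt : ℝ)) + ((mt : ℝ) / (1 + (mt : ℝ))) * stdNormSurvival t) /
    ((1 - γ) * stdNormSurvival t + γ * stdNormSurvival (t - μ)) - q



noncomputable def phig (x : ℝ) : ℝ := gaussianPDFReal 0 1 x

lemma phig_pos (x : ℝ) : 0 < phig x := gaussianPDFReal_pos 0 1 x one_ne_zero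

lemma phig_integrable : MeasureTheory.Integrable phig := integrable_gaussianPDFReal 0 1

lemma phig_cont : Continuous phig := by
  unfold phig
  rw [gaussianPDFReal_def]
  fun_prop

lemma S_eq_integral (t : ℝ) : stdNormSurvival t = ∫ x in Set.Ici t, phig x := by
  unfold stdNormSurvival phig
  rw [gaussianReal_apply_eq_integral 0 one_ne_zero]
  exact ENNReal.toReal_ofReal (setIntegral_nonneg measurableSet_Ici
    fun x _ => gaussianPDFReal_nonneg 0 1 x)

lemma S_pos (t : ℝ) : 0 < stdNormSurvival t := by
  unfold stdNormSurvival
  refine ENNReal.toReal_pos ?_ (measure_ne_top _ _)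
  intro h
  have h2 := (gaussianReal_absolutelyContinuous' 0 one_ne_zero) h
  rw [Real.volume_Ici] at h2
  simp at h2

lemma S_le_one (t : ℝ) : stdNormSurvival t ≤ 1 := by
  unfold stdNormSurvival
  have := prob_le_one (μ := gaussianReal 0 1) (s := Set.Ici t)
  simpa using ENNReal.toReal_mono ENNReal.one_ne_top this

lemma S_anti : Antitone stdNormSurvival := by
  intro a b hab
  unfold stdNormSurvival
  exact ENNReal.toReal_mono (measure_ne_top _ _) (measure_mono (Set.Ici_subset_Ici.mpr hab))

lemma S_eq_one_sub (t : ℝ) : stdNormSurvival t = 1 - ∫ x in Set.Iic t, phig x := by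
  have hIio : (gaussianReal 0 1) (Set.Iio t) = (gaussianReal 0 1) (Set.Iic t) := by
    have hsing : (gaussianReal 0 1) {t} = 0 :=
      (gaussianReal_absolutelyContinuous 0 one_ne_zero) (measure_singleton t)
    refine le_antisymm (measure_mono Set.Iio_subset_Iic_self) ?_
    calc (gaussianReal 0 1) (Set.Iic t) = (gaussianReal 0 1) (Set.Iio t ∪ {t}) := by
          rw [Set.Iio_union_right]
      _ ≤ (gaussianReal 0 1) (Set.Iio t) + (gaussianReal 0 1) {t} := measure_union_le _ _
      _ = (gaussianReal 0 1) (Set.Iio t) := by rw [hsing, add_zero]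
  have hcompl : Set.Ici t = (Set.Iio t)ᶜ := by simp
  unfold stdNormSurvival
  rw [hcompl, measure_compl measurableSet_Iio (measure_ne_top _ _), measure_univ, hIio,
    gaussianReal_apply_eq_integral 0 one_ne_zero]
  rw [ENNReal.toReal_sub_of_le (by
      rw [← gaussianReal_apply_eq_integral 0 one_ne_zero]; exact prob_le_one) ENNReal.one_ne_top]
  rw [ENNReal.toReal_one, ENNReal.toReal_ofReal (setIntegral_nonneg measurableSet_Iic
    fun x _ => gaussianPDFReal_nonneg 0 1 x)]
  rfl

lemma S_hasDeriv (t : ℝ) : HasDerivAt stdNormSurvival (-(phig t)) t := by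
  have hrepr : stdNormSurvival = fun u =>
      (1 - ∫ x in Set.Iic (0:ℝ), phig x) - ∫ x in (0:ℝ)..u, phig x := by
    funext u
    rw [S_eq_one_sub u, ← intervalIntegral.integral_Iic_sub_Iic
      (phig_integrable.integrableOn) (phig_integrable.integrableOn)]
    ring
  rw [hrepr]
  have h1 : HasDerivAt (fun u => ∫ x in (0:ℝ)..u, phig x) (phig t) t :=
    intervalIntegral.integral_hasDerivAt_right (phig_integrable.intervalIntegrable)
      (phig_cont.stronglyMeasurable.stronglyMeasurableAtFilter) phig_cont.continuousAt
  exact h1.const_sub _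

lemma S_cont : Continuous stdNormSurvival :=
  continuous_iff_continuousAt.mpr fun t => (S_hasDeriv t).continuousAt

lemma phig_shift (m x : ℝ) : phig (x - m) = Real.exp (m * x - m ^ 2 / 2) * phig x := by
  unfold phig
  rw [gaussianPDFReal_def]; simp only []
  simp only [NNReal.coe_one, mul_one, sub_zero]
  rw [mul_comm (Real.exp _), mul_assoc, ← Real.exp_add]
  congr 1
  ring

lemma phig_mono_abs {x B : ℝ} (hB : 0 ≤ B) (h : |x| ≤ B) : phig B ≤ phig x := by
  unfold phig
  rw [gaussianPDFReal_def]; simp only []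
  simp only [NNReal.coe_one, mul_one, sub_zero]
  have h2 : x ^ 2 ≤ B ^ 2 := sq_le_sq' (by linarith [abs_le.mp h]) (by linarith [abs_le.mp h])
  have : Real.exp (-B ^ 2 / 2) ≤ Real.exp (-x ^ 2 / 2) := Real.exp_le_exp.mpr (by linarith)
  have hc : (0:ℝ) < (Real.sqrt (2 * Real.pi))⁻¹ := by positivity
  exact mul_le_mul_of_nonneg_left this (le_of_lt hc)

lemma integral_shift (t m : ℝ) :
    ∫ x in Set.Ici t, phig (x - m) = ∫ x in Set.Ici (t - m), phig x := by
  have : ∫ x in Set.Ici t, phig (x - m) =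
      ∫ x, (Set.Ici (t - m)).indicator phig (x - m) := by
    rw [← integral_indicator measurableSet_Ici]
    congr 1
    funext x
    by_cases hx : x ∈ Set.Ici t
    · rw [Set.indicator_of_mem hx, Set.indicator_of_mem (by simp at hx ⊢; linarith)]
    · rw [Set.indicator_of_notMem hx, Set.indicator_of_notMem (by simp at hx ⊢; linarith)]
  rw [this, MeasureTheory.integral_sub_right_eq_self, integral_indicator measurableSet_Ici]

lemma g_repr (t m r : ℝ) (hr : r = Real.exp (m * t - m ^ 2 / 2)) :
    stdNormSurvival (t - m) - r * stdNormSurvival t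
      = ∫ x in Set.Ici t, (phig (x - m) - r * phig x) := by
  rw [integral_sub ((phig_integrable.comp_sub_right m).integrableOn)
    ((phig_integrable.const_mul r).integrableOn), integral_shift,
    MeasureTheory.integral_const_mul, ← S_eq_integral, ← S_eq_integral]

set_option maxHeartbeats 1000000 in
lemma key_g_bound (C μlo : ℝ) (hC : 0 < C) (hμlo : 0 < μlo) :
    ∃ δ > 0, ∀ m, μlo ≤ m → ∀ t, t ≤ C →
      δ ≤ stdNormSurvival (t - m) - Real.exp (m * t - m ^ 2 / 2) * stdNormSurvival t := by
  set s1 := stdNormSurvival (C - μlo) with hs1def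
  have hs1 : 0 < s1 := S_pos _
  have hs1le : s1 ≤ 1 := S_le_one _
  set L := Real.log (s1 / 2) with hLdef
  have hL : L < 0 := Real.log_neg (by positivity) (by linarith)
  set t0 := L / μlo with ht0def
  set B := max |t0| |C| + 2 with hBdef
  have hB : 0 ≤ B := by positivity
  have hphiB : 0 < phig B := phig_pos B
  set δ2 := phig B * (s1 / 2) * (Real.exp μlo - 1) with hδ2def
  have hexp1 : 1 < Real.exp μlo := by nlinarith [Real.add_one_le_exp μlo]
  have hδ2 : 0 < δ2 := by
    apply mul_pos (mul_pos hphiB (by positivity)); linarith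
  refine ⟨min (s1 / 2) δ2, lt_min (by positivity) hδ2, fun m hm t ht => ?_⟩
  have hm0 : 0 < m := lt_of_lt_of_le hμlo hm
  set r := Real.exp (m * t - m ^ 2 / 2) with hrdef
  have hr0 : 0 < r := Real.exp_pos _
  by_cases hcase : r ≤ s1 / 2
  · -- easy case: r small
    have hSmu : s1 ≤ stdNormSurvival (t - m) := S_anti (by linarith)
    have hSt : stdNormSurvival t ≤ 1 := S_le_one t
    have : r * stdNormSurvival t ≤ s1 / 2 := by
      calc r * stdNormSurvival t ≤ r * 1 := by
            exact mul_le_mul_of_nonneg_left hSt (le_of_lt hr0)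
        _ ≤ s1 / 2 := by linarith
    refine le_trans (min_le_left _ _) (by linarith)
  · -- main case: r > s1/2, so t is bounded below
    push_neg at hcase
    have hlog : L < m * t - m ^ 2 / 2 := by
      have h := Real.log_lt_log (by positivity) hcase
      rwa [hrdef, Real.log_exp] at h
    have htlow : t0 ≤ t := by
      have h1 : L < m * t := by nlinarith [sq_nonneg m]
      have h2 : L / m < t := by
        rw [div_lt_iff₀ hm0]; nlinarith
      have h3 : t0 ≤ L / m := by
        rw [ht0def, div_le_div_iff₀ hμlo hm0]
        exact mul_le_mul_of_nonpos_left hm (le_of_lt hL)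
      linarith
    -- integral lower bound
    rw [g_repr t m r hrdef]
    have hint : MeasureTheory.IntegrableOn (fun x => phig (x - m) - r * phig x) (Set.Ici t) := by
      exact ((phig_integrable.comp_sub_right m).sub (phig_integrable.const_mul r)).integrableOn
    have hnonneg : 0 ≤ᵐ[MeasureTheory.volume.restrict (Set.Ici t)]
        fun x => phig (x - m) - r * phig x := by
      filter_upwards [MeasureTheory.ae_restrict_mem measurableSet_Ici] with x hx
      simp only [Pi.zero_apply]
      rw [phig_shift]
      have hre : r ≤ Real.exp (m * x - m ^ 2 / 2) := by
        rw [hrdef]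
        exact Real.exp_le_exp.mpr (by nlinarith [Set.mem_Ici.mp hx])
      have := mul_le_mul_of_nonneg_right hre (le_of_lt (phig_pos x))
      linarith
    have hsub : ∫ x in Set.Icc (t + 1) (t + 2), (phig (x - m) - r * phig x)
        ≤ ∫ x in Set.Ici t, (phig (x - m) - r * phig x) := by
      refine MeasureTheory.setIntegral_mono_set hint hnonneg ?_
      exact HasSubset.Subset.eventuallyLE (fun x hx => le_trans (by linarith) hx.1)
    refine le_trans (min_le_right _ _) (le_trans ?_ hsub)
    have hconst : ∀ x ∈ Set.Icc (t + 1) (t + 2),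
        phig B * (r * (Real.exp μlo - 1)) ≤ phig (x - m) - r * phig x := by
      intro x hx
      obtain ⟨hx1, hx2⟩ := hx
      rw [phig_shift]
      have habs : |x| ≤ B := by
        rw [abs_le]
        constructor
        · have := neg_abs_le t0; nlinarith [le_max_left |t0| |C|]
        · nlinarith [le_abs_self C, le_max_right |t0| |C|]
      have hphix : phig B ≤ phig x := phig_mono_abs hB habs
      have hexp : r * Real.exp μlo ≤ Real.exp (m * x - m ^ 2 / 2) := by
        rw [hrdef, ← Real.exp_add]
        refine Real.exp_le_exp.mpr ?_
        have h5 : m * (t + 1) ≤ m * x := mul_le_mul_of_nonneg_left hx1 (le_of_lt hm0)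
        ring_nf at h5 ⊢
        linarith
      have h1 : r * (Real.exp μlo - 1) ≤ Real.exp (m * x - m ^ 2 / 2) - r := by
        have : r * (Real.exp μlo - 1) = r * Real.exp μlo - r := by ring
        linarith
      have h2 : 0 ≤ r * (Real.exp μlo - 1) := by
        have h3 : (0:ℝ) ≤ Real.exp μlo - 1 := by linarith
        positivity
      calc phig B * (r * (Real.exp μlo - 1)) ≤ phig x * (r * (Real.exp μlo - 1)) :=
            mul_le_mul_of_nonneg_right hphix h2
        _ ≤ phig x * (Real.exp (m * x - m ^ 2 / 2) - r) :=
            mul_le_mul_of_nonneg_left h1 (le_of_lt (phig_pos x))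
        _ = Real.exp (m * x - m ^ 2 / 2) * phig x - r * phig x := by ring
    have hmeas : (MeasureTheory.volume (Set.Icc (t + 1) (t + 2))).toReal = 1 := by
      rw [Real.volume_Icc]
      norm_num [ENNReal.toReal_ofReal]
    have := MeasureTheory.setIntegral_ge_of_const_le measurableSet_Icc
      (by rw [Real.volume_Icc]; exact ENNReal.ofReal_ne_top) hconst
      (hint.mono_set (fun x hx => le_trans (by linarith) hx.1))
    rw [measureReal_def, hmeas, smul_eq_mul, one_mul] at this
    refine le_trans ?_ this
    rw [hδ2def]
    have h2 : (0:ℝ) ≤ Real.exp μlo - 1 := by linarith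
    calc phig B * (s1 / 2) * (Real.exp μlo - 1)
        = phig B * (s1 / 2 * (Real.exp μlo - 1)) := by ring
      _ ≤ phig B * (r * (Real.exp μlo - 1)) :=
          mul_le_mul_of_nonneg_left
            (mul_le_mul_of_nonneg_right (le_of_lt hcase) h2) (le_of_lt hphiB)


set_option maxHeartbeats 1000000 in
theorem proxy_root_unique_point_mass
    (C q γ : ℝ) (hC : 0 < C) (hq : q ∈ Set.Ioo (0 : ℝ) 1) (hγ : γ ∈ Set.Ioo (0 : ℝ) 1)
    (μ : ℕ → ℝ) (μlo : ℝ) (hμlo : 0 < μlo) (hμ : ∀ mt, μlo ≤ μ mt) :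
    ∃ M : ℕ, ∀ mt : ℕ, M < mt →
      StrictAntiOn (proxyF γ q (μ mt) mt) (Set.Iic C) ∧
      ∀ t₁ ∈ Set.Iic C, ∀ t₂ ∈ Set.Iic C,
        proxyF γ q (μ mt) mt t₁ = 0 → proxyF γ q (μ mt) mt t₂ = 0 → t₁ = t₂ := by
  obtain ⟨hγ0, hγ1⟩ := hγ
  obtain ⟨δ, hδ, hg⟩ := key_g_bound C μlo hC hμlo
  set K := γ * Real.exp (C ^ 2 / 2) + 1 with hKdef
  have hK0 : 0 < K := by positivity
  refine ⟨max 1 ⌈2 * K / (γ * δ)⌉₊, fun mt hmt => ?_⟩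
  have hmt1 : 1 ≤ mt := le_of_lt (lt_of_le_of_lt (le_max_left _ _) hmt)
  have hmt1' : (1:ℝ) ≤ (mt:ℝ) := by exact_mod_cast hmt1
  have hmtpos : (0:ℝ) < 1 + (mt:ℝ) := by linarith
  have hmtbig : 2 * K / (γ * δ) < 1 + (mt:ℝ) := by
    have h1 : 2 * K / (γ * δ) ≤ (⌈2 * K / (γ * δ)⌉₊ : ℝ) := Nat.le_ceil _
    have h2 : ((⌈2 * K / (γ * δ)⌉₊ : ℕ) : ℝ) ≤ ((max 1 ⌈2 * K / (γ * δ)⌉₊ : ℕ) : ℝ) :=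
      Nat.cast_le.mpr (le_max_right _ _)
    have h3 : ((max 1 ⌈2 * K / (γ * δ)⌉₊ : ℕ) : ℝ) < (mt : ℝ) := Nat.cast_lt.mpr hmt
    linarith
  set m := μ mt with hmdef
  have hm : μlo ≤ m := hμ mt
  have hm0 : 0 < m := lt_of_lt_of_le hμlo hm
  set a := 1 / (1 + (mt:ℝ)) with hadef
  set b := (mt:ℝ) / (1 + (mt:ℝ)) with hbdef
  have ha0 : 0 < a := by positivity
  have hb : 1 / 2 ≤ b := by
    rw [hbdef, le_div_iff₀ hmtpos]; linarith
  have haK : a * K < γ * δ / 2 := by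
    rw [hadef, div_mul_eq_mul_div, div_lt_iff₀ hmtpos]
    rw [div_lt_iff₀ (by positivity)] at hmtbig
    ring_nf at hmtbig ⊢
    linarith
  have hD : ∀ t : ℝ, 0 < (1 - γ) * stdNormSurvival t + γ * stdNormSurvival (t - m) := by
    intro t
    have h1 := S_pos t
    have h2 := S_pos (t - m)
    nlinarith
  have hderiv : ∀ t : ℝ, HasDerivAt (proxyF γ q m mt)
      ((b * (-(phig t)) * ((1 - γ) * stdNormSurvival t + γ * stdNormSurvival (t - m))
        - (a + b * stdNormSurvival t) *
          ((1 - γ) * (-(phig t)) + γ * (-(phig (t - m)))))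
        / ((1 - γ) * stdNormSurvival t + γ * stdNormSurvival (t - m)) ^ 2) t := by
    intro t
    have hN : HasDerivAt (fun u => a + b * stdNormSurvival u) (b * (-(phig t))) t := by
      exact ((S_hasDeriv t).const_mul b).const_add a
    have hshift : HasDerivAt (fun u => stdNormSurvival (u - m)) (-(phig (t - m))) t := by
      have h := (S_hasDeriv (t - m)).comp t ((hasDerivAt_id t).sub_const m)
      simpa [Function.comp_def] using h
    have hDd : HasDerivAt
        (fun u => (1 - γ) * stdNormSurvival u + γ * stdNormSurvival (u - m))
        ((1 - γ) * (-(phig t)) + γ * (-(phig (t - m)))) t :=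
      ((S_hasDeriv t).const_mul (1 - γ)).add (hshift.const_mul γ)
    exact (hN.div hDd (ne_of_gt (hD t))).sub_const q
  have hnum : ∀ t : ℝ, t ≤ C →
      (b * (-(phig t)) * ((1 - γ) * stdNormSurvival t + γ * stdNormSurvival (t - m))
        - (a + b * stdNormSurvival t) *
          ((1 - γ) * (-(phig t)) + γ * (-(phig (t - m))))) < 0 := by
    intro t ht
    set r := Real.exp (m * t - m ^ 2 / 2) with hrdef
    have hr0 : 0 < r := Real.exp_pos _
    have hrC : r ≤ Real.exp (C ^ 2 / 2) := by
      refine Real.exp_le_exp.mpr ?_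
      nlinarith [sq_nonneg (m - C), mul_le_mul_of_nonneg_left ht (le_of_lt hm0)]
    have hgt : δ ≤ stdNormSurvival (t - m) - r * stdNormSurvival t := hg m hm t ht
    have hφ : 0 < phig t := phig_pos t
    rw [phig_shift m t, ← hrdef]
    have hrew : (b * (-(phig t)) * ((1 - γ) * stdNormSurvival t + γ * stdNormSurvival (t - m))
        - (a + b * stdNormSurvival t) *
          ((1 - γ) * (-(phig t)) + γ * (-(r * phig t))))
        = phig t * (a * (1 - γ + γ * r)
            - b * γ * (stdNormSurvival (t - m) - r * stdNormSurvival t)) := by ring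
    rw [hrew]
    refine mul_neg_of_pos_of_neg hφ ?_
    have h1 : a * (1 - γ + γ * r) ≤ a * K := by
      refine mul_le_mul_of_nonneg_left ?_ (le_of_lt ha0)
      rw [hKdef]
      nlinarith
    have h2 : γ * δ / 2 ≤ b * γ * (stdNormSurvival (t - m) - r * stdNormSurvival t) := by
      have hbX : (1/2) * δ ≤ b * (stdNormSurvival (t - m) - r * stdNormSurvival t) :=
        mul_le_mul hb hgt (le_of_lt hδ) (by linarith)
      calc γ * δ / 2 = γ * ((1/2) * δ) := by ring
        _ ≤ γ * (b * (stdNormSurvival (t - m) - r * stdNormSurvival t)) :=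
            mul_le_mul_of_nonneg_left hbX (le_of_lt hγ0)
        _ = b * γ * (stdNormSurvival (t - m) - r * stdNormSurvival t) := by ring
    have := lt_of_le_of_lt h1 (lt_of_lt_of_le haK h2)
    linarith
  have hanti : StrictAntiOn (proxyF γ q m mt) (Set.Iic C) := by
    refine strictAntiOn_of_deriv_neg (convex_Iic C) ?_ ?_
    · exact (continuous_iff_continuousAt.mpr
        fun t => (hderiv t).differentiableAt.continuousAt).continuousOn
    · intro x hx
      rw [interior_Iic] at hx
      rw [(hderiv x).deriv]
      exact div_neg_of_neg_of_pos (hnum x (le_of_lt hx)) (pow_pos (hD x) 2)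
  exact ⟨hanti, fun t₁ h₁ t₂ h₂ e₁ e₂ => hanti.injOn h₁ h₂ (e₁.trans e₂.symm)⟩
end
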